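/- arXiv:2603.18345 — 2 statements merged into one kernel-verified Lean document; each statement's English description precedes it below -/
import Mathlib

section
/- Data-processing inequality for Fisher information (finite case): if S is generated from X via a θ-independent kernel, then the Fisher information of S alone about θ is bounded by that of X: I_S(θ) ≤ I_X(θ). -/
open Finset

open Filter Topology in
private lemma d1_eventually {f : ℝ → ℝ} {θ : ℝ} (h2 : ContDiffAt ℝ 2 f θ) :
    ∀ᶠ t in 𝓝 θ, DifferentiableAt ℝ f t := by
  filter_upwards [h2.eventually (by simp)] with t ht
  exact ht.differentiableAt two_ne_zero

open Filter Topology in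
private lemma d2_diff {f : ℝ → ℝ} {θ : ℝ} (h2 : ContDiffAt ℝ 2 f θ) :
    DifferentiableAt ℝ (deriv f) θ := by
  obtain ⟨u, hu, hfu⟩ := h2.contDiffOn (le_refl 2) (by simp)
  have hfu' : ContDiffOn ℝ (1 + 1) f (interior u) := by
    have : ((1 : WithTop ℕ∞) + 1) = 2 := by norm_num
    rw [this]
    exact hfu.mono interior_subset
  obtain ⟨-, -, hd⟩ := (contDiffOn_succ_iff_deriv_of_isOpen isOpen_interior).mp hfu'
  exact (hd.differentiableOn (by norm_num)).differentiableAt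
    (isOpen_interior.mem_nhds (mem_interior_iff_mem_nhds.mpr hu))

open Filter Topology in
private lemma log_term {f : ℝ → ℝ} {θ : ℝ} (h2 : ContDiffAt ℝ 2 f θ)
    (hpos : ∀ᶠ t in 𝓝 θ, 0 < f t) :
    f θ * deriv (deriv (fun t => Real.log (f t))) θ
      = deriv (deriv f) θ - (deriv f θ) ^ 2 / f θ := by
  have h1 : ∀ᶠ t in 𝓝 θ, DifferentiableAt ℝ f t := d1_eventually h2
  have hE : deriv (fun t => Real.log (f t)) =ᶠ[𝓝 θ] fun t => deriv f t / f t := by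
    filter_upwards [h1, hpos] with t ht hpt
    exact (ht.hasDerivAt.log hpt.ne').deriv
  have hfθ : 0 < f θ := hpos.self_of_nhds
  rw [hE.deriv_eq, deriv_fun_div (d2_diff h2) h1.self_of_nhds hfθ.ne']
  field_simp

open Filter Topology in
private lemma deriv2_sum' {ι : Type*} (s : Finset ι) (g : ι → ℝ → ℝ) (θ : ℝ)
    (h : ∀ i ∈ s, ContDiffAt ℝ 2 (g i) θ) :
    deriv (deriv (fun t => ∑ i ∈ s, g i t)) θ = ∑ i ∈ s, deriv (deriv (g i)) θ := by
  have hev : ∀ᶠ t in 𝓝 θ, ∀ i ∈ s, DifferentiableAt ℝ (g i) t := by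
    rw [eventually_all_finset]
    exact fun i hi => d1_eventually (h i hi)
  have hE : deriv (fun t => ∑ i ∈ s, g i t) =ᶠ[𝓝 θ] fun t => ∑ i ∈ s, deriv (g i) t := by
    filter_upwards [hev] with t ht
    exact deriv_fun_sum ht
  rw [hE.deriv_eq, deriv_fun_sum fun i hi => d2_diff (h i hi)]

open Filter Topology in
private lemma deriv2_const_one {f : ℝ → ℝ} {θ : ℝ}
    (hE : f =ᶠ[𝓝 θ] fun _ => (1 : ℝ)) :
    deriv (deriv f) θ = 0 := by
  have h1 : deriv f =ᶠ[𝓝 θ] deriv (fun _ => (1 : ℝ)) := hE.deriv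
  rw [h1.deriv_eq]
  simp

open Filter Topology in
/-- Data-processing inequality for Fisher information (finite case):
if `S` is generated from `X` via a `θ`-independent kernel `k`, then with
`r θ s = ∑ x, p θ x * k x s` we have `I_S(θ) ≤ I_X(θ)`. -/
theorem fisher_info_data_processing
    {X S : Type*} [Fintype X] [Fintype S] (Θ : Set ℝ) (hΘ : IsOpen Θ)
    (p : ℝ → X → ℝ) (k : X → S → ℝ)
    (hp : ∀ θ ∈ Θ, ∀ x, 0 < p θ x)
    (hpsum : ∀ θ ∈ Θ, ∑ x, p θ x = 1)
    (hdiff : ∀ x, ∀ θ ∈ Θ, ContDiffAt ℝ 2 (fun t => p t x) θ)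
    (hk : ∀ x s, 0 < k x s)
    (hksum : ∀ x, ∑ s, k x s = 1)
    (θ : ℝ) (hθ : θ ∈ Θ) :
    -∑ s, (∑ x, p θ x * k x s) *
        deriv (deriv (fun t => Real.log (∑ x, p t x * k x s))) θ
      ≤ -∑ x, p θ x * deriv (deriv (fun t => Real.log (p t x))) θ := by
  classical
  have hΘn : Θ ∈ 𝓝 θ := hΘ.mem_nhds hθ
  have hXne : (univ : Finset X).Nonempty := by
    apply Finset.nonempty_of_sum_ne_zero (f := fun x => p θ x)
    rw [hpsum θ hθ]; norm_num
  have hr2 : ∀ s : S, ContDiffAt ℝ 2 (fun t => ∑ x, p t x * k x s) θ := fun s =>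
    ContDiffAt.sum fun x _ => (hdiff x θ hθ).mul contDiffAt_const
  have hrpos : ∀ s : S, ∀ᶠ t in 𝓝 θ, 0 < ∑ x, p t x * k x s := by
    intro s
    filter_upwards [hΘn] with t ht
    exact Finset.sum_pos (fun x _ => mul_pos (hp t ht x) (hk x s)) hXne
  have hppos : ∀ x : X, ∀ᶠ t in 𝓝 θ, 0 < p t x := by
    intro x; filter_upwards [hΘn] with t ht; exact hp t ht x
  set q : X → ℝ := fun x => deriv (fun t => p t x) θ with hqdef
  -- first derivative of r
  have hR1 : ∀ s : S, deriv (fun t => ∑ x, p t x * k x s) θ = ∑ x, q x * k x s := by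
    intro s
    rw [deriv_fun_sum fun x _ =>
      ((hdiff x θ hθ).differentiableAt two_ne_zero).mul_const (k x s)]
    exact Finset.sum_congr rfl fun x _ =>
      deriv_mul_const ((hdiff x θ hθ).differentiableAt two_ne_zero) (k x s)
  -- sum of second derivatives vanishes
  have hP2 : ∑ x, deriv (deriv (fun t => p t x)) θ = 0 := by
    rw [← deriv2_sum' univ (fun x t => p t x) θ fun x _ => hdiff x θ hθ]
    apply deriv2_const_one
    filter_upwards [hΘn] with t ht
    exact hpsum t ht
  have hR2 : ∑ s, deriv (deriv (fun t => ∑ x, p t x * k x s)) θ = 0 := by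
    rw [← deriv2_sum' univ (fun s t => ∑ x, p t x * k x s) θ fun s _ => hr2 s]
    apply deriv2_const_one
    filter_upwards [hΘn] with t ht
    calc ∑ s, ∑ x, p t x * k x s = ∑ x, ∑ s : S, p t x * k x s := Finset.sum_comm
      _ = ∑ x, p t x * ∑ s, k x s := by simp_rw [← Finset.mul_sum]
      _ = 1 := by simp_rw [hksum]; simpa using hpsum t ht
  -- rewrite both sides
  have hL : -∑ s, (∑ x, p θ x * k x s) *
      deriv (deriv (fun t => Real.log (∑ x, p t x * k x s))) θ
      = ∑ s, (∑ x, q x * k x s) ^ 2 / (∑ x, p θ x * k x s) := by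
    rw [Finset.sum_congr rfl fun s _ => log_term (hr2 s) (hrpos s)]
    rw [Finset.sum_sub_distrib, hR2]
    simp [hR1]
  have hRHS : -∑ x, p θ x * deriv (deriv (fun t => Real.log (p t x))) θ
      = ∑ x, (q x) ^ 2 / p θ x := by
    rw [Finset.sum_congr rfl fun x _ => log_term (hdiff x θ hθ) (hppos x)]
    rw [Finset.sum_sub_distrib, hP2]
    simp
    rfl
  rw [hL, hRHS]
  calc ∑ s, (∑ x, q x * k x s) ^ 2 / (∑ x, p θ x * k x s)
      ≤ ∑ s : S, ∑ x, (q x * k x s) ^ 2 / (p θ x * k x s) :=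
        Finset.sum_le_sum fun s _ =>
          Finset.sq_sum_div_le_sum_sq_div univ (fun x => q x * k x s)
            (fun x _ => mul_pos (hp θ hθ x) (hk x s))
    _ = ∑ x, (q x) ^ 2 / p θ x := by
        rw [Finset.sum_comm]
        refine Finset.sum_congr rfl fun x _ => ?_
        have : ∀ s : S, (q x * k x s) ^ 2 / (p θ x * k x s)
            = (q x) ^ 2 / p θ x * k x s := fun s => by
          have h1 : k x s ≠ 0 := (hk x s).ne'
          have h2 : p θ x ≠ 0 := (hp θ hθ x).ne'
          field_simp
        simp_rw [this, ← Finset.mul_sum, hksum, mul_one]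
end

section
/- Score form of the data-processing inequality: with r_θ(s) = ∑_x p_θ(x)k(s|x) and k independent of θ, for each s the squared score of the marginal satisfies r_θ(s)·(∂/∂θ log r_θ(s))² ≤ ∑_x k(s|x)·p_θ(x)·(∂/∂θ log p_θ(x))²; summing over s yields I_S(θ) ≤ I_X(θ) in score form. -/
open Finset

/-- Score form of the data-processing inequality: with
`r θ s = ∑ x, p θ x * k x s` and `k` independent of `θ`, for each `s` the squared score
of the marginal satisfies the pointwise bound, and summing over `s` gives
`I_S(θ) ≤ I_X(θ)` in score form. -/
theorem score_form_data_processing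
    {X S : Type*} [Fintype X] [Fintype S] (Θ : Set ℝ) (hΘ : IsOpen Θ)
    (p : ℝ → X → ℝ) (k : X → S → ℝ)
    (hp : ∀ θ ∈ Θ, ∀ x, 0 < p θ x)
    (hdiff : ∀ x, ∀ θ ∈ Θ, DifferentiableAt ℝ (fun t => p t x) θ)
    (hk : ∀ x s, 0 < k x s)
    (hksum : ∀ x, ∑ s, k x s = 1)
    (θ : ℝ) (hθ : θ ∈ Θ) :
    (∀ s, (∑ x, p θ x * k x s) *
        (deriv (fun t => Real.log (∑ x, p t x * k x s)) θ) ^ 2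
      ≤ ∑ x, k x s * p θ x * (deriv (fun t => Real.log (p t x)) θ) ^ 2) ∧
    (∑ s, (∑ x, p θ x * k x s) *
        (deriv (fun t => Real.log (∑ x, p t x * k x s)) θ) ^ 2
      ≤ ∑ x, p θ x * (deriv (fun t => Real.log (p t x)) θ) ^ 2) := by
  have hpos := hp θ hθ
  rcases isEmpty_or_nonempty X with hX | hX
  · constructor <;> simp
  have score : ∀ x, deriv (fun t => Real.log (p t x)) θ
      = deriv (fun t => p t x) θ / p θ x := fun x =>
    (((hdiff x θ hθ).hasDerivAt).log (hpos x).ne').deriv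
  have key : ∀ s, (∑ x, p θ x * k x s) *
        (deriv (fun t => Real.log (∑ x, p t x * k x s)) θ) ^ 2
      ≤ ∑ x, k x s * p θ x * (deriv (fun t => Real.log (p t x)) θ) ^ 2 := by
    intro s
    have hrpos : 0 < ∑ x, p θ x * k x s :=
      Finset.sum_pos (fun x _ => mul_pos (hpos x) (hk x s)) Finset.univ_nonempty
    have hr' : HasDerivAt (fun t => ∑ x, p t x * k x s)
        (∑ x, deriv (fun t => p t x) θ * k x s) θ :=
      HasDerivAt.fun_sum (fun x _ => ((hdiff x θ hθ).hasDerivAt).mul_const (k x s))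
    have hdr : deriv (fun t => Real.log (∑ x, p t x * k x s)) θ
        = (∑ x, deriv (fun t => p t x) θ * k x s) / (∑ x, p θ x * k x s) :=
      (hr'.log hrpos.ne').deriv
    have hcs := Finset.sum_mul_sq_le_sq_mul_sq Finset.univ
      (fun x => Real.sqrt (k x s * p θ x))
      (fun x => Real.sqrt (k x s * p θ x) * (deriv (fun t => p t x) θ / p θ x))
    have e1 : ∀ x : X, Real.sqrt (k x s * p θ x) *
        (Real.sqrt (k x s * p θ x) * (deriv (fun t => p t x) θ / p θ x))
        = deriv (fun t => p t x) θ * k x s := by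
      intro x
      have hkp : 0 ≤ k x s * p θ x := le_of_lt (mul_pos (hk x s) (hpos x))
      have hp0 : p θ x ≠ 0 := (hpos x).ne'
      rw [← mul_assoc, Real.mul_self_sqrt hkp]
      field_simp
    have e2 : ∀ x : X, (Real.sqrt (k x s * p θ x)) ^ 2 = p θ x * k x s := by
      intro x
      rw [Real.sq_sqrt (le_of_lt (mul_pos (hk x s) (hpos x))), mul_comm]
    have e3 : ∀ x : X, (Real.sqrt (k x s * p θ x) * (deriv (fun t => p t x) θ / p θ x)) ^ 2
        = k x s * p θ x * (deriv (fun t => p t x) θ / p θ x) ^ 2 := by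
      intro x
      rw [mul_pow, Real.sq_sqrt (le_of_lt (mul_pos (hk x s) (hpos x)))]
    simp only [e1, e2, e3] at hcs
    rw [hdr]
    have goal2 : (∑ x, p θ x * k x s) *
        ((∑ x, deriv (fun t => p t x) θ * k x s) / (∑ x, p θ x * k x s)) ^ 2
        = (∑ x, deriv (fun t => p t x) θ * k x s) ^ 2 / (∑ x, p θ x * k x s) := by
      field_simp
    rw [goal2]
    rw [div_le_iff₀ hrpos]
    calc (∑ x, deriv (fun t => p t x) θ * k x s) ^ 2
        ≤ (∑ x, p θ x * k x s) *
          ∑ x, k x s * p θ x * (deriv (fun t => p t x) θ / p θ x) ^ 2 := hcs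
      _ = (∑ x, k x s * p θ x * (deriv (fun t => Real.log (p t x)) θ) ^ 2)
          * (∑ x, p θ x * k x s) := by
        rw [mul_comm]
        congr 1
        refine Finset.sum_congr rfl fun x _ => ?_
        rw [score x]
  refine ⟨key, ?_⟩
  calc ∑ s, (∑ x, p θ x * k x s) *
        (deriv (fun t => Real.log (∑ x, p t x * k x s)) θ) ^ 2
      ≤ ∑ s, ∑ x, k x s * p θ x * (deriv (fun t => Real.log (p t x)) θ) ^ 2 :=
        Finset.sum_le_sum fun s _ => key s
    _ = ∑ x, p θ x * (deriv (fun t => Real.log (p t x)) θ) ^ 2 := by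
        rw [Finset.sum_comm]
        refine Finset.sum_congr rfl fun x _ => ?_
        simp only [mul_assoc]
        rw [← Finset.sum_mul, hksum x, one_mul]
end
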